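/- Let n ≥ 3 be an odd natural number. The subgroup C (the centralizer in Equiv.Perm {a : ZMod n // a ≠ 0} of the image of the unit-multiplication action of (ZMod n)ˣ) is a cyclic group if and only if n is prime. -/

import Mathlib

open Classical in
/-- Negating on an `S`-invariant set of nonzero residues. -/
noncomputable def tauPerm (n : ℕ) (S : Set (ZMod n)) (hS : ∀ a : ZMod n, a ∈ S → -a ∈ S) :
    Equiv.Perm {a : ZMod n // a ≠ 0} where
  toFun a := if (a : ZMod n) ∈ S then ⟨-a, neg_ne_zero.mpr a.2⟩ else a
  invFun a := if (a : ZMod n) ∈ S then ⟨-a, neg_ne_zero.mpr a.2⟩ else a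
  left_inv a := by
    by_cases h : (a : ZMod n) ∈ S
    · have h2 : (-(a : ZMod n)) ∈ S := hS _ h
      simp [h, h2]
    · simp [h]
  right_inv a := by
    by_cases h : (a : ZMod n) ∈ S
    · have h2 : (-(a : ZMod n)) ∈ S := hS _ h
      simp [h, h2]
    · simp [h]

open Classical in
lemma tauPerm_apply_coe (n : ℕ) (S : Set (ZMod n)) (hS : ∀ a : ZMod n, a ∈ S → -a ∈ S)
    (a : {a : ZMod n // a ≠ 0}) :
    ((tauPerm n S hS a : {a : ZMod n // a ≠ 0}) : ZMod n)
      = if (a : ZMod n) ∈ S then -(a : ZMod n) else (a : ZMod n) := by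
  by_cases h : (a : ZMod n) ∈ S <;> simp [tauPerm, h]

lemma tauPerm_mul_self (n : ℕ) (S : Set (ZMod n)) (hS : ∀ a : ZMod n, a ∈ S → -a ∈ S) :
    tauPerm n S hS * tauPerm n S hS = 1 :=
  Equiv.ext fun a => (tauPerm n S hS).left_inv a

/-- For odd `n ≥ 3`, the centralizer in the symmetric group on the nonzero
elements of `ZMod n` of the range of the multiplication action of `(ZMod n)ˣ` is a cyclic
group if and only if `n` is prime. -/
theorem stmt_1 (n : ℕ) (hn : 3 ≤ n) (hodd : Odd n)
    (ρ : (ZMod n)ˣ →* Equiv.Perm {a : ZMod n // a ≠ 0})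
    (hρ : ∀ (u : (ZMod n)ˣ) (a : {a : ZMod n // a ≠ 0}),
      ((ρ u a : {a : ZMod n // a ≠ 0}) : ZMod n) = (u : ZMod n) * (a : ZMod n)) :
    IsCyclic ↥(Subgroup.centralizer (ρ.range : Set (Equiv.Perm {a : ZMod n // a ≠ 0}))) ↔
      n.Prime := by
  classical
  haveI : NeZero n := ⟨by omega⟩
  haveI : Fact (1 < n) := ⟨by omega⟩
  set C := Subgroup.centralizer (ρ.range : Set (Equiv.Perm {a : ZMod n // a ≠ 0})) with hC
  set e1 : {a : ZMod n // a ≠ 0} := ⟨1, one_ne_zero⟩ with he1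
  have he1v : (e1 : ZMod n) = 1 := rfl
  -- 2 is a unit mod odd n
  have h2unit : IsUnit (2 : ZMod n) := by
    have : IsUnit ((2 : ℕ) : ZMod n) := by
      rw [ZMod.isUnit_iff_coprime]
      exact (Nat.prime_two.coprime_iff_not_dvd).mpr
        (by have := Nat.odd_iff.mp hodd; omega)
    simpa using this
  have hneg : ∀ a : ZMod n, a ≠ 0 → -a ≠ a := by
    intro a ha h
    have h2 : (2 : ZMod n) * a = 0 := by
      rw [two_mul]
      linear_combination -h
    exact ha ((h2unit.mul_right_eq_zero).mp h2)
  constructor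
  · -- cyclic → prime
    intro hcyc
    by_contra hnp
    obtain ⟨d, hdvd, hd2, hdn⟩ := Nat.exists_dvd_of_not_prime2 (by omega) hnp
    -- the two invariant sets
    set S₁ : Set (ZMod n) := {a | IsUnit a} with hS₁
    set S₂ : Set (ZMod n) := {a | ¬ IsUnit a} with hS₂
    have hS₁neg : ∀ a : ZMod n, a ∈ S₁ → -a ∈ S₁ := fun a ha => ha.neg
    have hS₂neg : ∀ a : ZMod n, a ∈ S₂ → -a ∈ S₂ := fun a ha h => ha (by simpa using h.neg)
    have hS₁mul : ∀ (u : (ZMod n)ˣ) (a : ZMod n), a ∈ S₁ ↔ (u : ZMod n) * a ∈ S₁ := by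
      intro u a; exact (Units.isUnit_units_mul u a).symm
    have hS₂mul : ∀ (u : (ZMod n)ˣ) (a : ZMod n), a ∈ S₂ ↔ (u : ZMod n) * a ∈ S₂ := by
      intro u a
      exact not_congr (Units.isUnit_units_mul u a).symm
    set τ₁ := tauPerm n S₁ hS₁neg with hτ₁
    set τ₂ := tauPerm n S₂ hS₂neg with hτ₂
    -- centralizer membership
    have hmem : ∀ (S : Set (ZMod n)) (hS : ∀ a : ZMod n, a ∈ S → -a ∈ S)
        (hSu : ∀ (u : (ZMod n)ˣ) (a : ZMod n), a ∈ S ↔ (u : ZMod n) * a ∈ S),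
        tauPerm n S hS ∈ C := by
      intro S hS hSu
      rw [hC, Subgroup.mem_centralizer_iff]
      rintro g hg
      rw [SetLike.mem_coe, MonoidHom.mem_range] at hg
      obtain ⟨u, rfl⟩ := hg
      ext a
      simp only [Equiv.Perm.mul_apply]
      rw [hρ, tauPerm_apply_coe, tauPerm_apply_coe, hρ]
      by_cases h : (a : ZMod n) ∈ S
      · rw [if_pos h, if_pos ((hSu u _).mp h), mul_neg]
      · rw [if_neg h, if_neg (fun hc => h ((hSu u _).mpr hc))]
    have hm1 : τ₁ ∈ C := hmem S₁ hS₁neg hS₁mul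
    have hm2 : τ₂ ∈ C := hmem S₂ hS₂neg hS₂mul
    -- τ₁ ≠ 1, τ₂ ≠ 1, τ₁ ≠ τ₂
    have h1S₁ : (1 : ZMod n) ∈ S₁ := isUnit_one
    have hτ₁e1 : ((τ₁ e1 : {a : ZMod n // a ≠ 0}) : ZMod n) = -1 := by
      rw [hτ₁, tauPerm_apply_coe, he1v, if_pos (show (1 : ZMod n) ∈ S₁ from isUnit_one)]
    have hτ₂e1 : ((τ₂ e1 : {a : ZMod n // a ≠ 0}) : ZMod n) = 1 := by
      rw [hτ₂, tauPerm_apply_coe, he1v, if_neg (show ¬((1 : ZMod n) ∈ S₂) from fun h => h isUnit_one)]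
    have hτ₁ne1 : τ₁ ≠ 1 := by
      intro h
      have := congrArg (fun p : Equiv.Perm {a : ZMod n // a ≠ 0} => ((p e1 : {a : ZMod n // a ≠ 0}) : ZMod n)) h
      simp only [hτ₁e1, Equiv.Perm.one_apply] at this
      exact hneg 1 one_ne_zero (this.trans rfl)
    -- the nonunit element d
    have hdne : ((d : ℕ) : ZMod n) ≠ 0 := by
      rw [Ne, ZMod.natCast_eq_zero_iff]
      intro h
      exact absurd (Nat.le_of_dvd (by omega) h) (by omega)
    have hdnu : ¬ IsUnit ((d : ℕ) : ZMod n) := by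
      rw [ZMod.isUnit_iff_coprime]
      intro h
      have := Nat.Coprime.eq_one_of_dvd h hdvd
      omega
    set ed : {a : ZMod n // a ≠ 0} := ⟨(d : ℕ), hdne⟩ with hed
    have hedv : (ed : ZMod n) = ((d : ℕ) : ZMod n) := rfl
    have hτ₂ed : ((τ₂ ed : {a : ZMod n // a ≠ 0}) : ZMod n) = -((d : ℕ) : ZMod n) := by
      rw [hτ₂, tauPerm_apply_coe, hedv, if_pos (show ((d : ℕ) : ZMod n) ∈ S₂ from hdnu)]
    have hτ₂ne1 : τ₂ ≠ 1 := by
      intro h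
      have := congrArg (fun p : Equiv.Perm {a : ZMod n // a ≠ 0} => ((p ed : {a : ZMod n // a ≠ 0}) : ZMod n)) h
      simp only [hτ₂ed, Equiv.Perm.one_apply] at this
      exact hneg _ hdne this
    have hτ₁ne₂ : τ₁ ≠ τ₂ := by
      intro h
      have := congrArg (fun p : Equiv.Perm {a : ZMod n // a ≠ 0} => ((p e1 : {a : ZMod n // a ≠ 0}) : ZMod n)) h
      simp only [hτ₁e1, hτ₂e1] at this
      exact hneg 1 one_ne_zero this
    -- three elements of order dividing 2 in a cyclic group: contradiction
    haveI : Fintype ↥C := Fintype.ofFinite _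
    set t1 : ↥C := ⟨τ₁, hm1⟩ with ht1
    set t2 : ↥C := ⟨τ₂, hm2⟩ with ht2
    have hsq : ∀ t : ↥C, (t : Equiv.Perm {a : ZMod n // a ≠ 0}) * (t : Equiv.Perm {a : ZMod n // a ≠ 0}) = 1 → t ^ 2 = 1 := by
      intro t h
      apply Subtype.ext
      rw [Subgroup.coe_pow, pow_two, h]
      rfl
    have ht1sq : t1 ^ 2 = 1 := hsq t1 (tauPerm_mul_self n S₁ hS₁neg)
    have ht2sq : t2 ^ 2 = 1 := hsq t2 (tauPerm_mul_self n S₂ hS₂neg)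
    have hsub : ({1, t1, t2} : Finset ↥C) ⊆ Finset.univ.filter (fun a => a ^ 2 = 1) := by
      intro x hx
      simp only [Finset.mem_insert, Finset.mem_singleton] at hx
      rcases hx with rfl | rfl | rfl <;>
        simp [ht1sq, ht2sq]
    have hcard : ({1, t1, t2} : Finset ↥C).card = 3 := by
      rw [Finset.card_insert_of_notMem (by
        simp only [Finset.mem_insert, Finset.mem_singleton]
        push_neg
        constructor
        · intro h; exact hτ₁ne1 (congrArg Subtype.val h).symm
        · intro h; exact hτ₂ne1 (congrArg Subtype.val h).symm),
        Finset.card_insert_of_notMem (by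
          simp only [Finset.mem_singleton]
          intro h; exact hτ₁ne₂ (congrArg Subtype.val h)),
        Finset.card_singleton]
    have hle := IsCyclic.card_pow_eq_one_le (α := ↥C) (n := 2) (by norm_num)
    have := Finset.card_le_card hsub
    omega
  · -- prime → cyclic
    intro hp
    haveI : Fact n.Prime := ⟨hp⟩
    -- key: any σ in the centralizer acts by right multiplication by σ e1
    have key : ∀ σ : Equiv.Perm {a : ZMod n // a ≠ 0}, σ ∈ C → ∀ x : {a : ZMod n // a ≠ 0},
        ((σ x : {a : ZMod n // a ≠ 0}) : ZMod n) = (x : ZMod n) * ((σ e1 : {a : ZMod n // a ≠ 0}) : ZMod n) := by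
      intro σ hσ x
      obtain ⟨u, hu⟩ := IsUnit.exists_left_inv (Ne.isUnit x.2).unit.isUnit
      -- simpler: get a unit with value x
      obtain ⟨v, hv⟩ := (Ne.isUnit x.2)
      have hx : ρ v e1 = x := by
        apply Subtype.ext
        rw [hρ]
        simp [hv, he1v]
      have hcomm := (Subgroup.mem_centralizer_iff.mp hσ) (ρ v)
        (by rw [SetLike.mem_coe, MonoidHom.mem_range]; exact ⟨v, rfl⟩)
      have happ := congrArg (fun p : Equiv.Perm {a : ZMod n // a ≠ 0} => p e1) hcomm
      simp only [Equiv.Perm.mul_apply] at happ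
      rw [← hx, ← happ, hρ, hρ, he1v, mul_one, hv]
    -- injective hom into the (cyclic) unit group of the field ZMod n
    let f : ↥C →* (ZMod n)ˣ :=
      { toFun := fun σ => Units.mk0 ((((σ : Equiv.Perm {a : ZMod n // a ≠ 0}) e1 : {a : ZMod n // a ≠ 0})) : ZMod n)
          ((σ : Equiv.Perm {a : ZMod n // a ≠ 0}) e1).2
        map_one' := by
          apply Units.ext
          simp [he1v]
        map_mul' := by
          intro σ τ
          apply Units.ext
          simp only [Units.val_mul, Units.val_mk0]
          have : ((σ : Equiv.Perm {a : ZMod n // a ≠ 0}) * (τ : Equiv.Perm {a : ZMod n // a ≠ 0})) e1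
              = (σ : Equiv.Perm {a : ZMod n // a ≠ 0}) ((τ : Equiv.Perm {a : ZMod n // a ≠ 0}) e1) := rfl
          rw [show ((↑(σ * τ) : Equiv.Perm {a : ZMod n // a ≠ 0}) e1) = (σ : Equiv.Perm {a : ZMod n // a ≠ 0}) ((τ : Equiv.Perm {a : ZMod n // a ≠ 0}) e1)
            from rfl, key (σ : Equiv.Perm {a : ZMod n // a ≠ 0}) σ.2 ((τ : Equiv.Perm {a : ZMod n // a ≠ 0}) e1), mul_comm] }
    have hinj : Function.Injective f := by
      intro σ τ h
      have h1 : (((σ : Equiv.Perm {a : ZMod n // a ≠ 0}) e1 : {a : ZMod n // a ≠ 0}) : ZMod n) = (((τ : Equiv.Perm {a : ZMod n // a ≠ 0}) e1 : {a : ZMod n // a ≠ 0}) : ZMod n) :=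
        congrArg Units.val h
      apply Subtype.ext
      apply Equiv.ext
      intro a
      apply Subtype.ext
      rw [key (σ : Equiv.Perm {a : ZMod n // a ≠ 0}) σ.2 a, key (τ : Equiv.Perm {a : ZMod n // a ≠ 0}) τ.2 a, h1]
    haveI : IsCyclic (↥f.range) := Subgroup.isCyclic _
    exact isCyclic_of_surjective (MonoidHom.ofInjective hinj).symm.toMonoidHom
      (MulEquiv.surjective _)
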